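/- The three-qubit Mølmer–Sørensen gate U_{Y²}(π/2) := exp(−i(π/8)(Y⊗I₂⊗I₂ + I₂⊗Y⊗I₂ + I₂⊗I₂⊗Y)²), an 8×8 unitary on ℂ^2 ⊗ ℂ^4 (control qubit first), factors as U_{Y²}(π/2) = (Z ⊗ U''_Y)(Z ⊗ Π'₋ + X ⊗ Π'₊), where Π'_± = (I₄ ± Y⊗Y)/2 are the orthogonal projectors onto the ±1 eigenspaces of Y⊗Y on the two system qubits, and U''_Y = (1/2) e^{−iπ/8} · M_Y with M_Y the 4×4 matrix whose rows (in the computational basis) are (1,1,1,1), (−1,1,−1,1), (−1,−1,1,1), (1,−1,−1,1). -/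

import Mathlib

open Matrix
open Kronecker

/-- Pauli matrices. -/
def PX : Matrix (Fin 2) (Fin 2) ℂ := !![0, 1; 1, 0]
def PY : Matrix (Fin 2) (Fin 2) ℂ := !![0, -Complex.I; Complex.I, 0]
def PZ : Matrix (Fin 2) (Fin 2) ℂ := !![1, 0; 0, -1]

/-- The collective spin operator `S_y = Y₁ + Y₂ + Y₃` on three qubits
(control qubit first). -/
def Sy3 : Matrix (Fin 2 × (Fin 2 × Fin 2)) (Fin 2 × (Fin 2 × Fin 2)) ℂ :=
  PY ⊗ₖ ((1 : Matrix (Fin 2) (Fin 2) ℂ) ⊗ₖ (1 : Matrix (Fin 2) (Fin 2) ℂ))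
    + (1 : Matrix (Fin 2) (Fin 2) ℂ) ⊗ₖ (PY ⊗ₖ (1 : Matrix (Fin 2) (Fin 2) ℂ))
    + (1 : Matrix (Fin 2) (Fin 2) ℂ) ⊗ₖ ((1 : Matrix (Fin 2) (Fin 2) ℂ) ⊗ₖ PY)

/-- The three-qubit Mølmer–Sørensen gate `U_{Y²}(π/2) = exp(−i(π/8) S_y²)`. -/
noncomputable def UY2 : Matrix (Fin 2 × (Fin 2 × Fin 2)) (Fin 2 × (Fin 2 × Fin 2)) ℂ :=
  NormedSpace.exp ((-(Complex.I) * (Real.pi / 8)) • (Sy3 * Sy3))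

/-- The projectors onto the `±1` eigenspaces of `Y⊗Y` on the two system qubits. -/
noncomputable def ProjYp : Matrix (Fin 2 × Fin 2) (Fin 2 × Fin 2) ℂ :=
  ((2 : ℂ)⁻¹) • ((1 : Matrix (Fin 2 × Fin 2) (Fin 2 × Fin 2) ℂ) + PY ⊗ₖ PY)

noncomputable def ProjYm : Matrix (Fin 2 × Fin 2) (Fin 2 × Fin 2) ℂ :=
  ((2 : ℂ)⁻¹) • ((1 : Matrix (Fin 2 × Fin 2) (Fin 2 × Fin 2) ℂ) - PY ⊗ₖ PY)

/-- The 4×4 matrix `M_Y` with rows (in the computational basis `|00⟩,|01⟩,|10⟩,|11⟩`)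
`(1,1,1,1)`, `(−1,1,−1,1)`, `(−1,−1,1,1)`, `(1,−1,−1,1)`. -/
def MY : Matrix (Fin 2 × Fin 2) (Fin 2 × Fin 2) ℂ :=
  Matrix.of fun p q =>
    !![1, 1, 1, 1; -1, 1, -1, 1; -1, -1, 1, 1; 1, -1, -1, 1]
      (finProdFinEquiv p) (finProdFinEquiv q)

/-- The residual unitary `U''_Y = (1/2) e^{−iπ/8} M_Y`. -/
noncomputable def UY'' : Matrix (Fin 2 × Fin 2) (Fin 2 × Fin 2) ℂ :=
  ((2 : ℂ)⁻¹ * Complex.exp (-(Complex.I) * (Real.pi / 8))) • MY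

/- auxiliary -/
def G8 : Matrix (Fin 2 × (Fin 2 × Fin 2)) (Fin 2 × (Fin 2 × Fin 2)) ℂ :=
  PY ⊗ₖ (PY ⊗ₖ (1 : Matrix (Fin 2) (Fin 2) ℂ))
    + PY ⊗ₖ ((1 : Matrix (Fin 2) (Fin 2) ℂ) ⊗ₖ PY)
    + (1 : Matrix (Fin 2) (Fin 2) ℂ) ⊗ₖ (PY ⊗ₖ PY)

lemma hY2 : PY * PY = 1 := by
  ext i j
  fin_cases i <;> fin_cases j <;>
    simp [PY, Matrix.mul_apply, Fin.sum_univ_two, Matrix.one_apply, Complex.I_mul_I]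

lemma hSq : Sy3 * Sy3 = (3:ℂ) • 1 + (2:ℂ) • G8 := by
  simp only [Sy3, G8, add_mul, mul_add, ← Matrix.mul_kronecker_mul, hY2,
    Matrix.one_mul, Matrix.mul_one, Matrix.one_kronecker_one]
  module

lemma hGsq : G8 * G8 = (3:ℂ) • 1 + (2:ℂ) • G8 := by
  simp only [G8, add_mul, mul_add, ← Matrix.mul_kronecker_mul, hY2,
    Matrix.one_mul, Matrix.mul_one, Matrix.one_kronecker_one]
  module

open NormedSpace in
set_option maxHeartbeats 1000000 in
lemma exp_smul_idem {A : Type*} [NormedRing A] [NormedAlgebra ℂ A] [CompleteSpace A]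
    (P : A) (hP : P * P = P) (a : ℂ) :
    exp (a • P) = 1 + (Complex.exp a - 1) • P := by
  have hPn : ∀ n : ℕ, P ^ (n + 1) = P := by
    intro n; induction n with
    | zero => simp
    | succ k ih => rw [pow_succ, ih, hP]
  have hsum : Summable fun n : ℕ => ((Nat.factorial n : ℂ))⁻¹ • (a • P) ^ n :=
    expSeries_summable' (a • P)
  have hs : Summable fun n : ℕ => ((Nat.factorial n : ℂ))⁻¹ • a ^ n :=
    expSeries_summable' (𝕂 := ℂ) a
  have hs' : Summable fun n : ℕ => ((Nat.factorial (n+1) : ℂ))⁻¹ • a ^ (n+1) :=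
    (summable_nat_add_iff 1).mpr hs
  have hexpa : Complex.exp a = 1 + ∑' n : ℕ, ((Nat.factorial (n+1) : ℂ))⁻¹ • a ^ (n+1) := by
    rw [Complex.exp_eq_exp_ℂ, exp_eq_tsum (𝕂 := ℂ)]; beta_reduce
    rw [Summable.tsum_eq_zero_add hs]; simp
  rw [exp_eq_tsum (𝕂 := ℂ)]; beta_reduce
  rw [Summable.tsum_eq_zero_add hsum]
  have h1 : ∀ n : ℕ, ((Nat.factorial (n+1) : ℂ))⁻¹ • (a • P) ^ (n+1)
      = (((Nat.factorial (n+1) : ℂ))⁻¹ • a ^ (n+1)) • P := by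
    intro n
    rw [smul_pow, hPn, smul_smul, smul_eq_mul]
  simp only [h1]
  rw [Summable.tsum_smul_const hs' P]
  rw [show (∑' n : ℕ, ((Nat.factorial (n+1) : ℂ))⁻¹ • a ^ (n+1)) = Complex.exp a - 1 by
    rw [hexpa]; ring]
  simp

open NormedSpace in
set_option maxHeartbeats 1000000 in
lemma exp_smul_one_add_idem {n : Type*} [Fintype n] [DecidableEq n]
    (P : Matrix n n ℂ) (hP : P * P = P) (c a : ℂ) :
    exp (c • (1 : Matrix n n ℂ) + a • P)
      = Complex.exp c • ((1 : Matrix n n ℂ) + (Complex.exp a - 1) • P) := by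
  letI : SeminormedRing (Matrix n n ℂ) := Matrix.linftyOpSemiNormedRing
  letI : NormedRing (Matrix n n ℂ) := Matrix.linftyOpNormedRing
  letI : NormedAlgebra ℂ (Matrix n n ℂ) := Matrix.linftyOpNormedAlgebra
  rw [Matrix.exp_add_of_commute _ _ ((Commute.one_left (a • P)).smul_left c)]
  rw [show c • (1 : Matrix n n ℂ) = algebraMap ℂ _ c from (Algebra.algebraMap_eq_smul_one c).symm]
  rw [show exp (algebraMap ℂ (Matrix n n ℂ) c) = algebraMap ℂ _ (exp c) from (algebraMap_exp_comm c).symm,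
    show exp (a • P) = 1 + (Complex.exp a - 1) • P from exp_smul_idem P hP a, ← Complex.exp_eq_exp_ℂ]
  rw [Algebra.algebraMap_eq_smul_one, smul_mul_assoc, one_mul]

noncomputable def Pproj : Matrix (Fin 2 × (Fin 2 × Fin 2)) (Fin 2 × (Fin 2 × Fin 2)) ℂ :=
  (4:ℂ)⁻¹ • ((1 : Matrix (Fin 2 × (Fin 2 × Fin 2)) (Fin 2 × (Fin 2 × Fin 2)) ℂ) + G8)

lemma hPproj : Pproj * Pproj = Pproj := by
  simp only [Pproj, smul_mul_assoc, mul_smul_comm, add_mul, mul_add,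
    Matrix.one_mul, Matrix.mul_one, hGsq]
  module


set_option maxHeartbeats 2000000 in
/-- Decomposition of the Mølmer–Sørensen gate `U_{Y²}(π/2)` into a residual local
unitary `Z ⊗ U''_Y` and the conditional gate `Z ⊗ Π'₋ + X ⊗ Π'₊`. -/
theorem MS_gate_Y_decomposition :
    UY2 = (PZ ⊗ₖ UY'') * (PZ ⊗ₖ ProjYm + PX ⊗ₖ ProjYp) := by
  set c : ℂ := -(Complex.I) * (Real.pi / 8) with hc
  have hdecomp : c • (Sy3 * Sy3) = c • (1 : Matrix (Fin 2 × (Fin 2 × Fin 2)) (Fin 2 × (Fin 2 × Fin 2)) ℂ) + (8*c) • Pproj := by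
    rw [hSq]; unfold Pproj; module
  have h8c : Complex.exp (8*c) = -1 := by
    rw [show (8:ℂ)*c = -((Real.pi : ℂ) * Complex.I) by rw [hc]; ring]
    rw [Complex.exp_neg, Complex.exp_pi_mul_I]
    norm_num
  have hUY2 : UY2 = Complex.exp c • ((1 : Matrix (Fin 2 × (Fin 2 × Fin 2)) (Fin 2 × (Fin 2 × Fin 2)) ℂ) + (-2:ℂ) • Pproj) := by
    rw [UY2, ← hc, hdecomp, exp_smul_one_add_idem Pproj hPproj, h8c]
    norm_num
  rw [hUY2]
  have hpull : (PZ ⊗ₖ UY'') * (PZ ⊗ₖ ProjYm + PX ⊗ₖ ProjYp)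
      = ((2:ℂ)⁻¹ * Complex.exp c) •
        ((PZ ⊗ₖ MY) * (PZ ⊗ₖ ProjYm + PX ⊗ₖ ProjYp)) := by
    rw [UY'', ← hc, Matrix.kronecker_smul, smul_mul_assoc]
  rw [hpull]
  rw [show Complex.exp c • ((1 : Matrix (Fin 2 × (Fin 2 × Fin 2)) (Fin 2 × (Fin 2 × Fin 2)) ℂ) + (-2:ℂ) • Pproj)
      = ((2:ℂ)⁻¹ * Complex.exp c) • ((2:ℂ) • ((1 : Matrix (Fin 2 × (Fin 2 × Fin 2)) (Fin 2 × (Fin 2 × Fin 2)) ℂ) + (-2:ℂ) • Pproj)) by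
    rw [smul_smul, show (2:ℂ)⁻¹ * Complex.exp c * 2 = Complex.exp c by ring]]
  congr 1
  ext ⟨a, b, d⟩ ⟨a', b', d'⟩
  fin_cases a <;> fin_cases b <;> fin_cases d <;> fin_cases a' <;> fin_cases b' <;> fin_cases d' <;>
    simp [Pproj, G8, MY, ProjYm, ProjYp, PX, PY, PZ, Matrix.mul_apply,
      Fintype.sum_prod_type, Fin.sum_univ_two, Matrix.one_apply, finProdFinEquiv,
      Prod.ext_iff, Complex.I_mul_I] <;>
    norm_num
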